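/- Let g, h ∈ K be nondecreasing functions in L²(0,1), and let P_{H_g} be the orthogonal projection onto the closed subspace H_g of functions essentially constant on each connected component of the open set Ω_g where g is locally constant. Then ξ_h := P_{H_g}(h) - h belongs to the subdifferential ∂I_K(g). -/

import Mathlib

open MeasureTheory Set Filter

noncomputable section

/-- Lebesgue measure restricted to the interval (0,1). -/
def μ01 : MeasureTheory.Measure ℝ := MeasureTheory.volume.restrict (Set.Ioo 0 1)

/-- The convex cone `K` of (essentially) nondecreasing functions in L²(0,1). -/
def coneK : Set (ℝ → ℝ) := {g | MonotoneOn g (Set.Ioo 0 1) ∧ MeasureTheory.MemLp g 2 μ01}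

/-- `g` is the L²(0,1)-orthogonal projection of `f` onto the cone `K`,
characterized by the variational inequality `⟨f - g, z - g⟩ ≤ 0` for all `z ∈ K`. -/
def IsProjK (f g : ℝ → ℝ) : Prop :=
  g ∈ coneK ∧ ∀ z ∈ coneK, (∫ w in Set.Ioo (0:ℝ) 1, (f w - g w) * (z w - g w)) ≤ 0

/-- The convex envelope of `F` on `[0,1]`: the supremum of affine functions below `F` there. -/
def convEnv (F : ℝ → ℝ) (w : ℝ) : ℝ :=
  sSup {y | ∃ a b : ℝ, y = a + b * w ∧ ∀ v ∈ Set.Icc (0:ℝ) 1, a + b * v ≤ F v}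

/-- The open set `Ω_g ⊆ (0,1)` of points near which `g` is essentially constant. -/
def locConstSet (g : ℝ → ℝ) : Set ℝ :=
  {w | w ∈ Set.Ioo (0:ℝ) 1 ∧ ∃ a b c : ℝ, a < w ∧ w < b ∧
    ∀ᵐ x ∂μ01, x ∈ Set.Ioo a b → g x = c}

/-- The closed subspace `H_g` of L²(0,1) functions essentially constant on each
open interval contained in `Ω_g`. -/
def Hspace (g : ℝ → ℝ) : Set (ℝ → ℝ) :=
  {u | MeasureTheory.MemLp u 2 μ01 ∧ ∀ a b : ℝ, Set.Ioo a b ⊆ locConstSet g →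
    ∃ c : ℝ, ∀ᵐ x ∂μ01, x ∈ Set.Ioo a b → u x = c}

/-- `ξ` belongs to the subdifferential `∂I_K(g)` of the indicator function of `K` at `g ∈ K`. -/
def subdiffIK (g ξ : ℝ → ℝ) : Prop :=
  g ∈ coneK ∧ ∀ z ∈ coneK, (∫ w in Set.Ioo (0:ℝ) 1, ξ w * (z w - g w)) ≤ 0

/-- `P` is the L²(0,1)-orthogonal projection of `h` onto the closed subspace `H_g`. -/
def IsProjH (g h P : ℝ → ℝ) : Prop :=
  P ∈ Hspace g ∧ ∀ u ∈ Hspace g, (∫ w in Set.Ioo (0:ℝ) 1, (h w - P w) * u w) = 0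

/-! ### Auxiliary lemmas -/

instance : IsFiniteMeasure μ01 := by
  constructor
  rw [μ01, Measure.restrict_apply_univ]
  simp [Real.volume_Ioo]

lemma mu01_apply {s : Set ℝ} (hs : MeasurableSet s) : μ01 s = volume (s ∩ Set.Ioo 0 1) := by
  rw [μ01, Measure.restrict_apply hs]

lemma mu01_Ioo_pos {a b : ℝ} (hab : a < b) (hsub : Set.Ioo a b ⊆ Set.Ioo 0 1) :
    0 < μ01 (Set.Ioo a b) := by
  rw [mu01_apply measurableSet_Ioo, Set.inter_eq_self_of_subset_left hsub, Real.volume_Ioo]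
  simpa using hab

lemma mul_integrable {α : Type*} {m : MeasurableSpace α} {μ : Measure α} {f g : α → ℝ}
    (hf : MemLp f 2 μ) (hg : MemLp g 2 μ) : Integrable (fun x => f x * g x) μ := by
  have h1 := (hf.add hg).integrable_sq
  have h2 := hf.integrable_sq
  have h3 := hg.integrable_sq
  have e : (fun x => f x * g x) = fun x => ((f x + g x)^2 - f x ^2 - g x ^2)/2 := by
    funext x; ring
  rw [e]
  exact (((h1.sub h2).sub h3).div_const 2)

lemma const_unique {g : ℝ → ℝ} {a1 b1 a2 b2 c1 c2 w : ℝ}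
    (hw1 : w ∈ Set.Ioo a1 b1) (hw2 : w ∈ Set.Ioo a2 b2) (hw01 : w ∈ Set.Ioo (0:ℝ) 1)
    (h1 : ∀ᵐ x ∂μ01, x ∈ Set.Ioo a1 b1 → g x = c1)
    (h2 : ∀ᵐ x ∂μ01, x ∈ Set.Ioo a2 b2 → g x = c2) : c1 = c2 := by
  set lo := max a1 (max a2 0) with hlo
  set hi := min b1 (min b2 1) with hhi
  have hwlo : lo < w := by
    simp only [hlo, max_lt_iff]; exact ⟨hw1.1, hw2.1, hw01.1⟩
  have hwhi : w < hi := by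
    simp only [hhi, lt_min_iff]; exact ⟨hw1.2, hw2.2, hw01.2⟩
  have hsub : Set.Ioo lo hi ⊆ Set.Ioo 0 1 := fun x hx =>
    ⟨lt_of_le_of_lt (le_max_of_le_right (le_max_right _ _)) hx.1,
     lt_of_lt_of_le hx.2 (min_le_of_right_le (min_le_right _ _))⟩
  have hpos : 0 < μ01 (Set.Ioo lo hi) := mu01_Ioo_pos (hwlo.trans hwhi) hsub
  have key : ∃ x ∈ Set.Ioo lo hi,
      (x ∈ Set.Ioo a1 b1 → g x = c1) ∧ (x ∈ Set.Ioo a2 b2 → g x = c2) := by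
    by_contra hcon
    have hs : Set.Ioo lo hi ⊆ {x | ¬ ((x ∈ Set.Ioo a1 b1 → g x = c1) ∧
        (x ∈ Set.Ioo a2 b2 → g x = c2))} := fun x hx h => hcon ⟨x, hx, h⟩
    exact absurd (measure_mono_null hs (ae_iff.1 (h1.and h2))) hpos.ne'
  obtain ⟨x, hx, hx1, hx2⟩ := key
  have hm1 : x ∈ Set.Ioo a1 b1 :=
    ⟨lt_of_le_of_lt (le_max_left _ _) hx.1, lt_of_lt_of_le hx.2 (min_le_left _ _)⟩
  have hm2 : x ∈ Set.Ioo a2 b2 :=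
    ⟨lt_of_le_of_lt (le_max_of_le_right (le_max_left _ _)) hx.1,
     lt_of_lt_of_le hx.2 (min_le_of_right_le (min_le_left _ _))⟩
  rw [← hx1 hm1, hx2 hm2]

lemma locConstSet_subset (g : ℝ → ℝ) : locConstSet g ⊆ Set.Ioo 0 1 := fun _ h => h.1

lemma isOpen_locConstSet (g : ℝ → ℝ) : IsOpen (locConstSet g) := by
  rw [isOpen_iff_mem_nhds]
  rintro w ⟨hw01, a, b, c, ha, hb, hae⟩
  have : Set.Ioo (max a 0) (min b 1) ∈ nhds w := by
    apply Ioo_mem_nhds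
    · simp [ha, hw01.1]
    · simp [hb, hw01.2]
  filter_upwards [this] with x hx
  refine ⟨⟨lt_of_le_of_lt (le_max_right _ _) hx.1, lt_of_lt_of_le hx.2 (min_le_right _ _)⟩,
    a, b, c, lt_of_le_of_lt (le_max_left _ _) hx.1, lt_of_lt_of_le hx.2 (min_le_left _ _), hae⟩

lemma ae_const_of_subset {g : ℝ → ℝ} {a b : ℝ} (hab : Set.Ioo a b ⊆ locConstSet g) :
    ∃ c : ℝ, ∀ᵐ x ∂μ01, x ∈ Set.Ioo a b → g x = c := by
  by_cases hlt : a < b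
  · have hext : ∀ w : ↥(Set.Ioo a b), ∃ A B c : ℝ, A < (w:ℝ) ∧ (w:ℝ) < B ∧
        (∀ᵐ x ∂μ01, x ∈ Set.Ioo A B → g x = c) := fun w => (hab w.2).2
    choose A B Cc hA hB hAE using hext
    haveI : PreconnectedSpace ↥(Set.Ioo a b) := Subtype.preconnectedSpace isPreconnected_Ioo
    have hloc : IsLocallyConstant Cc := by
      rw [IsLocallyConstant.iff_exists_open]
      intro x
      refine ⟨Subtype.val ⁻¹' Set.Ioo (A x) (B x), (isOpen_Ioo).preimage continuous_subtype_val,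
        ⟨hA x, hB x⟩, ?_⟩
      intro y hy
      exact const_unique ⟨hA y, hB y⟩ hy (hab y.2).1 (hAE y) (hAE x)
    have hw0 : (a + b)/2 ∈ Set.Ioo a b := ⟨by linarith, by linarith⟩
    set w0 : ↥(Set.Ioo a b) := ⟨(a+b)/2, hw0⟩
    refine ⟨Cc w0, ?_⟩
    set s : ↥(Set.Ioo a b) → Set ℝ := fun w => Set.Ioo (A w) (B w) with hs
    obtain ⟨T, hTc, hTcover⟩ := TopologicalSpace.isOpen_iUnion_countable s (fun _ => isOpen_Ioo)
    have hT : ∀ᵐ x ∂μ01, ∀ w : ↥(Set.Ioo a b), w ∈ T → (x ∈ s w → g x = Cc w0) := by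
      rw [ae_ball_iff hTc]
      intro w _
      have h1 := hAE w
      have h2 : Cc w = Cc w0 := hloc.apply_eq_of_preconnectedSpace w w0
      filter_upwards [h1] with x hx hxs
      rw [← h2]; exact hx hxs
    filter_upwards [hT] with x hx hxab
    have hmem : x ∈ ⋃ w, s w := Set.mem_iUnion.2 ⟨⟨x, hxab⟩, hA ⟨x, hxab⟩, hB ⟨x, hxab⟩⟩
    rw [← hTcover] at hmem
    obtain ⟨w, hwT, hxw⟩ := Set.mem_iUnion₂.1 hmem
    exact hx w hwT hxw
  · refine ⟨0, ?_⟩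
    have : Set.Ioo a b = ∅ := Set.Ioo_eq_empty hlt
    filter_upwards with x hx
    rw [this] at hx; exact absurd hx (Set.notMem_empty x)

lemma open_ordconn_eq_Ioo {S : Set ℝ} (hO : IsOpen S) (hC : S.OrdConnected)
    (hsub : S ⊆ Set.Ioo 0 1) (hne : S.Nonempty) : S = Set.Ioo (sInf S) (sSup S) := by
  have hbb : BddBelow S := ⟨0, fun x hx => (hsub hx).1.le⟩
  have hba : BddAbove S := ⟨1, fun x hx => (hsub hx).2.le⟩
  ext x
  constructor
  · intro hx
    obtain ⟨ε, hε, hball⟩ := Metric.isOpen_iff.1 hO x hx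
    rw [Real.ball_eq_Ioo] at hball
    have h1 : x - ε/2 ∈ S := hball ⟨by linarith, by linarith⟩
    have h2 : x + ε/2 ∈ S := hball ⟨by linarith, by linarith⟩
    exact ⟨lt_of_le_of_lt (csInf_le hbb h1) (by linarith),
      lt_of_lt_of_le (by linarith : x < x + ε/2) (le_csSup hba h2)⟩
  · rintro ⟨h1, h2⟩
    obtain ⟨y, hy, hyx⟩ := exists_lt_of_csInf_lt hne h1
    obtain ⟨y', hy', hxy'⟩ := exists_lt_of_lt_csSup hne h2
    exact hC.out hy hy' ⟨hyx.le, hxy'.le⟩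

lemma chebyshev {α β c : ℝ} (hsub : Set.Ioo α β ⊆ Set.Ioo 0 1) (hαβ : α < β)
    {h z : ℝ → ℝ} (hhm : MonotoneOn h (Set.Ioo 0 1)) (hzm : MonotoneOn z (Set.Ioo 0 1))
    (hh2 : MemLp h 2 μ01) (hz2 : MemLp z 2 μ01)
    (hzero : (∫ x in Set.Ioo α β, (c - h x) ∂μ01) = 0) :
    (∫ x in Set.Ioo α β, (c - h x) * z x ∂μ01) ≤ 0 := by
  set ν := μ01.restrict (Set.Ioo α β) with hν
  set f : ℝ → ℝ := fun x => c - h x with hf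
  have hf2 : MemLp f 2 ν := (memLp_const c).sub (hh2.restrict _)
  have hz2' : MemLp z 2 ν := hz2.restrict _
  have hfz_int : Integrable (fun x => f x * z x) ν := mul_integrable hf2 hz2'
  have hf_int : Integrable f ν := hf2.integrable one_le_two
  have hz_int : Integrable z ν := hz2'.integrable one_le_two
  set I := ∫ x, f x * z x ∂ν with hI
  set m := (ν Set.univ).toReal with hm
  have hmpos : 0 < m := by
    rw [hm, hν, Measure.restrict_apply_univ]
    exact ENNReal.toReal_pos (mu01_Ioo_pos hαβ hsub).ne' (measure_ne_top _ _)
  have hpt : ∀ᵐ p ∂(ν.prod ν), (f p.1 - f p.2) * (z p.1 - z p.2) ≤ 0 := by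
    have hprod : ν.prod ν = (μ01.prod μ01).restrict (Set.Ioo α β ×ˢ Set.Ioo α β) := by
      rw [hν, Measure.prod_restrict]
    rw [hprod]
    filter_upwards [ae_restrict_mem (measurableSet_Ioo.prod measurableSet_Ioo)] with p hp
    obtain ⟨hp1, hp2⟩ := hp
    have hx := hsub hp1
    have hy := hsub hp2
    have key : 0 ≤ (h p.1 - h p.2) * (z p.1 - z p.2) := by
      rcases le_total p.1 p.2 with hle | hle
      · have := hhm hx hy hle
        have := hzm hx hy hle
        nlinarith
      · have := hhm hy hx hle
        have := hzm hy hx hle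
        nlinarith
    simp only [hf]
    nlinarith
  have hA : ∫ x, f x ∂ν = 0 := hzero
  have hone : Integrable (fun _ : ℝ => (1:ℝ)) ν := integrable_const 1
  have i1 : Integrable (fun p : ℝ × ℝ => f p.1 * z p.1) (ν.prod ν) := by
    simpa using hfz_int.mul_prod hone
  have i2 : Integrable (fun p : ℝ × ℝ => f p.1 * z p.2) (ν.prod ν) := hf_int.mul_prod hz_int
  have i3 : Integrable (fun p : ℝ × ℝ => z p.1 * f p.2) (ν.prod ν) := hz_int.mul_prod hf_int
  have i4 : Integrable (fun p : ℝ × ℝ => f p.2 * z p.2) (ν.prod ν) := by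
    simpa using hone.mul_prod hfz_int
  have e1 : ∫ p : ℝ × ℝ, f p.1 * z p.1 ∂(ν.prod ν) = I * m := by
    have := integral_prod_mul (μ := ν) (ν := ν) (fun x => f x * z x) (fun _ => (1:ℝ))
    simpa [integral_const, smul_eq_mul, hI, hm, Measure.real] using this
  have e2 : ∫ p : ℝ × ℝ, f p.1 * z p.2 ∂(ν.prod ν) = 0 := by
    have := integral_prod_mul (μ := ν) (ν := ν) f z
    rw [hA] at this
    simpa using this
  have e3 : ∫ p : ℝ × ℝ, z p.1 * f p.2 ∂(ν.prod ν) = 0 := by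
    have := integral_prod_mul (μ := ν) (ν := ν) z f
    rw [hA] at this
    simpa using this
  have e4 : ∫ p : ℝ × ℝ, f p.2 * z p.2 ∂(ν.prod ν) = m * I := by
    have := integral_prod_mul (μ := ν) (ν := ν) (fun _ => (1:ℝ)) (fun x => f x * z x)
    simpa [integral_const, smul_eq_mul, hI, hm, Measure.real] using this
  have hint : ∫ p : ℝ × ℝ, (f p.1 - f p.2) * (z p.1 - z p.2) ∂(ν.prod ν) = 2 * m * I := by
    rw [show (fun p : ℝ × ℝ => (f p.1 - f p.2) * (z p.1 - z p.2))
        = fun p : ℝ × ℝ => (f p.1 * z p.1 - f p.1 * z p.2) - (z p.1 * f p.2 - f p.2 * z p.2)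
        from funext fun p => by ring]
    have E : ∫ p : ℝ × ℝ, (f p.1 * z p.1 - f p.1 * z p.2) - (z p.1 * f p.2 - f p.2 * z p.2)
          ∂(ν.prod ν)
        = (∫ p : ℝ × ℝ, f p.1 * z p.1 - f p.1 * z p.2 ∂(ν.prod ν))
          - ∫ p : ℝ × ℝ, z p.1 * f p.2 - f p.2 * z p.2 ∂(ν.prod ν) :=
      integral_sub (i1.sub i2) (i3.sub i4)
    have E2 : ∫ p : ℝ × ℝ, f p.1 * z p.1 - f p.1 * z p.2 ∂(ν.prod ν)
        = (∫ p : ℝ × ℝ, f p.1 * z p.1 ∂(ν.prod ν)) - ∫ p : ℝ × ℝ, f p.1 * z p.2 ∂(ν.prod ν) :=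
      integral_sub i1 i2
    have E3 : ∫ p : ℝ × ℝ, z p.1 * f p.2 - f p.2 * z p.2 ∂(ν.prod ν)
        = (∫ p : ℝ × ℝ, z p.1 * f p.2 ∂(ν.prod ν)) - ∫ p : ℝ × ℝ, f p.2 * z p.2 ∂(ν.prod ν) :=
      integral_sub i3 i4
    rw [E, E2, E3, e1, e2, e3, e4]
    ring
  have hle : ∫ p : ℝ × ℝ, (f p.1 - f p.2) * (z p.1 - z p.2) ∂(ν.prod ν) ≤ 0 :=
    integral_nonpos_of_ae hpt
  rw [hint] at hle
  nlinarith

theorem stmt11 (g h P : ℝ → ℝ) (hg : g ∈ coneK) (hh : h ∈ coneK)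
    (hP : IsProjH g h P) : subdiffIK g (fun w => P w - h w) := by
  obtain ⟨hPH, hPorth⟩ := hP
  have hg2 : MemLp g 2 μ01 := hg.2
  have hh2 : MemLp h 2 μ01 := hh.2
  have hP2 : MemLp P 2 μ01 := hPH.1
  have hPh2 : MemLp (fun w => P w - h w) 2 μ01 := hP2.sub hh2
  have hgH : g ∈ Hspace g := ⟨hg2, fun a b hab => ae_const_of_subset hab⟩
  refine ⟨hg, fun z hz => ?_⟩
  have hz2 : MemLp z 2 μ01 := hz.2
  have int_z : Integrable (fun w => (P w - h w) * z w) μ01 := mul_integrable hPh2 hz2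
  have int_g : Integrable (fun w => (P w - h w) * g w) μ01 := mul_integrable hPh2 hg2
  show (∫ w, (P w - h w) * (z w - g w) ∂μ01) ≤ 0
  have hsub1 : (∫ w, (P w - h w) * (z w - g w) ∂μ01)
      = (∫ w, (P w - h w) * z w ∂μ01) - ∫ w, (P w - h w) * g w ∂μ01 := by
    rw [← integral_sub int_z int_g]
    exact integral_congr_ae (Eventually.of_forall fun w => by ring)
  have hgorth : (∫ w, (h w - P w) * g w ∂μ01) = 0 := hPorth g hgH
  have hg0 : (∫ w, (P w - h w) * g w ∂μ01) = 0 := by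
    have e : (fun w => (P w - h w) * g w) = fun w => -((h w - P w) * g w) :=
      funext fun w => by ring
    rw [e, integral_neg, hgorth, neg_zero]
  rw [hsub1, hg0, sub_zero]
  -- Step A : h = P a.e. outside Ω
  set Ω : Set ℝ := locConstSet g with hΩdef
  have hΩo : IsOpen Ω := isOpen_locConstSet g
  have hΩm : MeasurableSet Ω := hΩo.measurableSet
  have huH : Set.indicator Ωᶜ (fun w => h w - P w) ∈ Hspace g := by
    constructor
    · exact (hh2.sub hP2).indicator hΩm.compl
    · intro a b hab
      refine ⟨0, Eventually.of_forall fun x hx => Set.indicator_of_notMem ?_ _⟩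
      rw [Set.notMem_compl_iff]
      exact hab hx
  have horthu2 : (∫ w, (h w - P w) * Set.indicator Ωᶜ (fun w => h w - P w) w ∂μ01) = 0 :=
    hPorth _ huH
  have hrw : (fun w => (h w - P w) * Set.indicator Ωᶜ (fun w => h w - P w) w)
      = Set.indicator Ωᶜ (fun w => (h w - P w)^2) := by
    funext w
    by_cases hw : w ∈ Ωᶜ
    · rw [Set.indicator_of_mem hw, Set.indicator_of_mem hw]; ring
    · rw [Set.indicator_of_notMem hw, Set.indicator_of_notMem hw, mul_zero]
  rw [hrw, integral_indicator hΩm.compl] at horthu2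
  have hsqint : IntegrableOn (fun w => (h w - P w)^2) Ωᶜ μ01 :=
    ((hh2.sub hP2).integrable_sq).integrableOn
  have hae0 : (fun w => (h w - P w)^2) =ᵐ[μ01.restrict Ωᶜ] 0 :=
    (integral_eq_zero_iff_of_nonneg_ae (Eventually.of_forall fun x => sq_nonneg _) hsqint).1
      horthu2
  have haePH : ∀ᵐ x ∂μ01.restrict Ωᶜ, P x = h x := by
    filter_upwards [hae0] with x hx
    have hx' : (h x - P x)^2 = 0 := hx
    nlinarith [sq_nonneg (h x - P x)]
  have hcompl : (∫ w in Ωᶜ, (P w - h w) * z w ∂μ01) = 0 := by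
    apply integral_eq_zero_of_ae
    filter_upwards [haePH] with x hx
    simp [hx]
  have hsplit := integral_add_compl hΩm int_z
  rw [← hsplit, hcompl, add_zero]
  -- Step B : decompose Ω into connected components
  set e : ℕ → ℝ := TopologicalSpace.denseSeq ℝ with he
  set C : ℕ → Set ℝ := fun n => connectedComponentIn Ω (e n) with hC
  have hCopen : ∀ n, IsOpen (C n) := fun n => hΩo.connectedComponentIn
  have hCsub : ∀ n, C n ⊆ Ω := fun n => connectedComponentIn_subset _ _
  have hcover : ⋃ n, C n = Ω := by
    apply Set.Subset.antisymm (Set.iUnion_subset hCsub)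
    intro w hw
    have hwc : w ∈ connectedComponentIn Ω w := mem_connectedComponentIn hw
    obtain ⟨n, hn⟩ := (TopologicalSpace.denseRange_denseSeq ℝ).exists_mem_open
      hΩo.connectedComponentIn ⟨w, hwc⟩
    refine Set.mem_iUnion.2 ⟨n, ?_⟩
    have hEq : connectedComponentIn Ω w = C n := connectedComponentIn_eq hn
    rw [← hEq]
    exact hwc
  set D : ℕ → Set ℝ := disjointed C with hD
  have hDm : ∀ n, MeasurableSet (D n) :=
    MeasurableSet.disjointed (fun n => (hCopen n).measurableSet)
  have hDdisj : Pairwise (Function.onFun Disjoint D) := disjoint_disjointed C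
  have hDU : ⋃ n, D n = Ω := by rw [hD, iUnion_disjointed, hcover]
  rw [← hDU, integral_iUnion hDm hDdisj int_z.integrableOn]
  apply tsum_nonpos
  intro n
  have hDn : D n = ∅ ∨ D n = C n := by
    by_cases hdis : ∀ i < n, Disjoint (C i) (C n)
    · right
      rw [hD, disjointed_eq_inter_compl]
      apply Set.Subset.antisymm Set.inter_subset_left
      intro x hx
      refine ⟨hx, ?_⟩
      simp only [Set.mem_iInter, Set.mem_compl_iff]
      intro i hi hxi
      exact (hdis i hi).le_bot ⟨hxi, hx⟩
    · left
      push_neg at hdis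
      obtain ⟨i, hi, hnd⟩ := hdis
      obtain ⟨y, hyi, hyn⟩ := Set.not_disjoint_iff.1 hnd
      have hCin : C i = C n := by
        calc C i = connectedComponentIn Ω y := connectedComponentIn_eq hyi
        _ = C n := (connectedComponentIn_eq hyn).symm
      rw [hD, disjointed_eq_inter_compl]
      apply Set.eq_empty_of_subset_empty
      intro x hx
      have hx1 : x ∈ C n := hx.1
      have hx2 := hx.2
      simp only [Set.mem_iInter, Set.mem_compl_iff] at hx2
      exact absurd (hCin ▸ hx1) (hx2 i hi)
  rcases hDn with hemp | heq
  · rw [hemp]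
    simp
  rw [heq]
  rcases Set.eq_empty_or_nonempty (C n) with hem | hne
  · rw [hem]
    simp
  -- Step C : Chebyshev on the component C n = Ioo α β
  have hpre : IsPreconnected (C n) := isPreconnected_connectedComponentIn
  have hsubΩ01 : C n ⊆ Set.Ioo (0:ℝ) 1 := (hCsub n).trans (locConstSet_subset g)
  have hIoo : C n = Set.Ioo (sInf (C n)) (sSup (C n)) :=
    open_ordconn_eq_Ioo (hCopen n) hpre.ordConnected hsubΩ01 hne
  set α := sInf (C n) with hα
  set β := sSup (C n) with hβ
  have hαβ : α < β := by
    obtain ⟨x, hx⟩ := hne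
    rw [hIoo] at hx
    exact hx.1.trans hx.2
  have hsubIoo : Set.Ioo α β ⊆ Set.Ioo (0:ℝ) 1 := hIoo ▸ hsubΩ01
  have hsubΩ' : Set.Ioo α β ⊆ locConstSet g := hIoo ▸ hCsub n
  obtain ⟨cP, hcP⟩ := hPH.2 α β hsubΩ'
  have hindH : Set.indicator (C n) (fun _ => (1:ℝ)) ∈ Hspace g := by
    constructor
    · exact (memLp_const 1).indicator (hCopen n).measurableSet
    · intro a b hab
      rcases Set.eq_empty_or_nonempty (Set.Ioo a b ∩ C n) with hdis | ⟨y, hy1, hy2⟩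
      · refine ⟨0, Eventually.of_forall fun x hx => Set.indicator_of_notMem
          (fun hxc => Set.eq_empty_iff_forall_notMem.1 hdis x ⟨hx, hxc⟩) _⟩
      · have hsubC : Set.Ioo a b ⊆ C n := by
          have h1 : Set.Ioo a b ⊆ connectedComponentIn Ω y :=
            isPreconnected_Ioo.subset_connectedComponentIn hy1 hab
          have h2 : C n = connectedComponentIn Ω y := connectedComponentIn_eq hy2
          rw [h2]
          exact h1
        exact ⟨1, Eventually.of_forall fun x hx => Set.indicator_of_mem (hsubC hx) _⟩
  have horthind2 : (∫ w, (h w - P w) * Set.indicator (C n) (fun _ => (1:ℝ)) w ∂μ01) = 0 :=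
    hPorth _ hindH
  have hrwi : (fun w => (h w - P w) * Set.indicator (C n) (fun _ => (1:ℝ)) w)
      = Set.indicator (C n) (fun w => h w - P w) := by
    funext w
    by_cases hw : w ∈ C n
    · rw [Set.indicator_of_mem hw, Set.indicator_of_mem hw, mul_one]
    · rw [Set.indicator_of_notMem hw, Set.indicator_of_notMem hw, mul_zero]
  rw [hrwi, integral_indicator (hCopen n).measurableSet, hIoo] at horthind2
  have hzero : (∫ x in Set.Ioo α β, (cP - h x) ∂μ01) = 0 := by
    have hcongr : (∫ x in Set.Ioo α β, (h x - P x) ∂μ01)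
        = ∫ x in Set.Ioo α β, (h x - cP) ∂μ01 := by
      apply setIntegral_congr_ae measurableSet_Ioo
      filter_upwards [hcP] with x hx hxm
      rw [hx hxm]
    have h0 : (∫ x in Set.Ioo α β, (h x - cP) ∂μ01) = 0 := by rw [← hcongr]; exact horthind2
    have hneg : (fun x => cP - h x) = fun x => -(h x - cP) := funext fun x => by ring
    rw [hneg, integral_neg, h0, neg_zero]
  have hcheb := chebyshev hsubIoo hαβ hh.1 hz.1 hh2 hz2 hzero
  have hfinal : (∫ x in Set.Ioo α β, (P x - h x) * z x ∂μ01)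
      = ∫ x in Set.Ioo α β, (cP - h x) * z x ∂μ01 := by
    apply setIntegral_congr_ae measurableSet_Ioo
    filter_upwards [hcP] with x hx hxm
    rw [hx hxm]
  rw [hIoo, hfinal]
  exact hcheb
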